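/- If the polar complex Γ(C) of a code C ⊆ 2^[n] is shellable, then C has no weak bitflip local obstructions: for every g ∈ (Z/2)^n and every τ ∈ Δ(g·C) with link_τ Δ(g·C) not contractible, one has τ ∈ g·C. -/

import Mathlib

open scoped symmDiff

def polarFace {n : ℕ} (σ : Finset (Fin n)) : Finset (Fin n ⊕ Fin n) :=
  σ.image Sum.inl ∪ σᶜ.image Sum.inr

def polar {n : ℕ} (C : Set (Finset (Fin n))) : Set (Finset (Fin n ⊕ Fin n)) :=
  {F | ∃ σ ∈ C, F ⊆ polarFace σ}

/-- `Δ(C)`: the simplicial complex generated by the codewords of `C`. -/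
def simplicialOfCode {n : ℕ} (C : Set (Finset (Fin n))) : Set (Finset (Fin n)) :=
  {ν | ∃ σ ∈ C, ν ⊆ σ}

def link {V : Type*} [DecidableEq V] (Δ : Set (Finset V)) (T : Finset V) :
    Set (Finset V) :=
  {ν ∈ Δ | ν ∩ T = ∅ ∧ ν ∪ T ∈ Δ}

def IsShelling {V : Type*} [DecidableEq V] {t : ℕ} (k : ℕ) (F : Fin t → Finset V) :
    Prop :=
  (∀ i, (F i).card = k) ∧ Function.Injective F ∧
  ∀ i : Fin t, 0 < (i : ℕ) → ∀ ν ⊆ F i, (∃ j, j < i ∧ ν ⊆ F j) →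
    ∃ μ, μ ⊆ F i ∧ (∃ j, j < i ∧ μ ⊆ F j) ∧ ν ⊆ μ ∧ μ.card = k - 1

def Shellable {V : Type*} [DecidableEq V] (k : ℕ) (Δ : Set (Finset V)) : Prop :=
  ∃ (t : ℕ) (F : Fin t → Finset V), IsShelling k F ∧ Δ = {ν | ∃ i, ν ⊆ F i}

/-- The geometric realization of an abstract simplicial complex on a finite vertex
set `V`, inside `V → ℝ`. -/
def realization {V : Type*} [Fintype V] [DecidableEq V] (Δ : Set (Finset V)) :
    Set (V → ℝ) :=
  {f | (∀ v, 0 ≤ f v) ∧ (∑ v, f v) = 1 ∧ ∃ s ∈ Δ, ∀ v, f v ≠ 0 ↔ v ∈ s}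


section Topology

variable {V : Type*} [Fintype V] [DecidableEq V]

lemma realization_mono {K K' : Set (Finset V)} (h : K ⊆ K') :
    realization K ⊆ realization K' := by
  rintro f ⟨h1, h2, s, hs, h3⟩
  exact ⟨h1, h2, s, h hs, h3⟩

lemma contractible_of_cone (K : Set (Finset V)) (z : V)
    (hcone : ∀ s ∈ K, insert z s ∈ K)
    (hz : ({z} : Finset V) ∈ K) : ContractibleSpace (realization K) := by
  classical
  rw [contractible_iff_id_nullhomotopic]
  have hzmem : (fun v => if v = z then (1:ℝ) else 0) ∈ realization K := by
    refine ⟨fun v => by by_cases hv : v = z <;> simp [hv], by simp, {z}, hz, fun v => by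
      by_cases hv : v = z <;> simp [hv]⟩
  refine ⟨⟨_, hzmem⟩, ⟨?_⟩⟩
  refine
    { toFun := fun p =>
        ⟨fun v => (1 - (p.1 : ℝ)) * p.2.1 v + (p.1 : ℝ) * (if v = z then 1 else 0), ?_⟩
      continuous_toFun := ?_
      map_zero_left := ?_
      map_one_left := ?_ }
  · -- membership
    obtain ⟨hpos, hsum, s₀, hs₀, hsupp⟩ := p.2.2
    have hs0 : (0:ℝ) ≤ (p.1 : ℝ) := p.1.2.1
    have hs1 : (p.1 : ℝ) ≤ 1 := p.1.2.2
    refine ⟨?_, ?_, ?_⟩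
    · intro v
      have hite : (0:ℝ) ≤ (if v = z then (1:ℝ) else 0) := by
        by_cases hv : v = z <;> simp [hv]
      exact add_nonneg (mul_nonneg (by linarith) (hpos v)) (mul_nonneg hs0 hite)
    · rw [Finset.sum_add_distrib, ← Finset.mul_sum, ← Finset.mul_sum, hsum]
      simp
    · by_cases h0 : (p.1 : ℝ) = 0
      · refine ⟨s₀, hs₀, fun v => ?_⟩
        dsimp only
        simp only [h0]
        rw [show (1 - 0 : ℝ) * p.2.1 v + 0 * (if v = z then 1 else 0) = p.2.1 v by ring]
        exact hsupp v
      · by_cases h1 : (p.1 : ℝ) = 1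
        · refine ⟨{z}, hz, fun v => ?_⟩
          dsimp only
          simp only [h1]
          rw [show (1 - 1 : ℝ) * p.2.1 v + 1 * (if v = z then 1 else 0)
              = (if v = z then 1 else 0) by ring]
          by_cases hv : v = z <;> simp [hv]
        · have hpos1 : 0 < (p.1 : ℝ) := lt_of_le_of_ne hs0 (Ne.symm h0)
          have hlt1 : (p.1 : ℝ) < 1 := lt_of_le_of_ne hs1 h1
          refine ⟨insert z s₀, hcone s₀ hs₀, fun v => ?_⟩
          dsimp only
          by_cases hv : v = z
          · rw [if_pos hv, hv]
            constructor
            · intro _; exact Finset.mem_insert_self _ _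
            · intro _
              have h2 := hpos v
              rw [hv] at h2
              nlinarith
          · simp only [if_neg hv]
            rw [show (1 - (p.1:ℝ)) * p.2.1 v + (p.1:ℝ) * 0 = (1 - (p.1:ℝ)) * p.2.1 v by ring]
            rw [Finset.mem_insert]
            have h1s : (1 - (p.1:ℝ)) ≠ 0 := by linarith
            constructor
            · intro h
              exact Or.inr ((hsupp v).1 (fun hfv => h (by rw [hfv, mul_zero])))
            · rintro (h | h)
              · exact absurd h hv
              · exact mul_ne_zero h1s ((hsupp v).2 h)
  · -- continuity
    apply Continuous.subtype_mk
    apply continuous_pi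
    intro v
    have hc1 : Continuous fun p : unitInterval × (realization K) => (p.1 : ℝ) :=
      continuous_subtype_val.comp continuous_fst
    have hc2 : Continuous fun p : unitInterval × (realization K) => p.2.1 v :=
      (continuous_apply v).comp (continuous_subtype_val.comp continuous_snd)
    exact ((continuous_const.sub hc1).mul hc2).add (hc1.mul continuous_const)
  · intro f
    apply Subtype.ext
    funext v
    simp
  · intro f
    apply Subtype.ext
    funext v
    simp



lemma contractible_step (K K' : Set (Finset V)) (Xm Y : Finset V)
    (hXm : Xm.Nonempty) (hY : Y.Nonempty) (hdisj : Disjoint Xm Y)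
    (hsub : K' ⊆ K)
    (hKR : ∀ ν : Finset V, ν ⊆ Xm ∪ Y → ν ∈ K)
    (hK'ofR : ∀ ν : Finset V, ν ⊆ Xm ∪ Y → ¬ Xm ⊆ ν → ν ∈ K')
    (hKcases : ∀ ν ∈ K, ν ∈ K' ∨ ν ⊆ Xm ∪ Y)
    (hK'nXm : ∀ ν ∈ K', ¬ Xm ⊆ ν)
    (hc : ContractibleSpace (realization K')) :
    ContractibleSpace (realization K) := by
  classical
  set R : Finset V := Xm ∪ Y with hR
  have hYcard : (0:ℝ) < (Y.card : ℝ) := by exact_mod_cast Finset.card_pos.2 hY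
  set w : ℝ := (Xm.card : ℝ) / (Y.card : ℝ) with hw
  have hw0 : 0 ≤ w := div_nonneg (by positivity) (le_of_lt hYcard)
  set r : ℝ → (V → ℝ) → V → ℝ :=
    fun a f v => f v - (if v ∈ Xm then a else 0) + (if v ∈ Y then a * w else 0) with hrdef
  set c : (V → ℝ) → ℝ := fun f => Xm.inf' hXm f with hcdef
  have hccont : Continuous c := Continuous.finset_inf'_apply hXm (fun i _ => continuous_apply i)
  have hr0 : ∀ f, r 0 f = f := by
    intro f; funext v; simp [hrdef]
  have hcnn : ∀ f : V → ℝ, (∀ v, 0 ≤ f v) → 0 ≤ c f := by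
    intro f hf
    obtain ⟨x, hx, hxe⟩ := Finset.exists_mem_eq_inf' hXm f
    rw [hcdef]
    simp only []
    rw [hxe]
    exact hf x
  have hcle : ∀ (f : V → ℝ) x, x ∈ Xm → c f ≤ f x := fun f x hx => Finset.inf'_le _ hx
  have hcapp : ∀ f : V → ℝ, c f = Xm.inf' hXm f := fun f => rfl
  -- membership along the homotopy
  have memK : ∀ f ∈ realization K, ∀ a : ℝ, 0 ≤ a → a ≤ c f → r a f ∈ realization K := by
    rintro f ⟨hpos, hsum, s₀, hs₀K, hsupp⟩ a ha0 hac
    have hfx : ∀ x ∈ Xm, a ≤ f x := fun x hx => le_trans hac (hcle f x hx)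
    refine ⟨?_, ?_, ?_⟩
    · intro v
      rw [hrdef]
      dsimp only
      by_cases hvX : v ∈ Xm
      · have hvY : v ∉ Y := fun h => (Finset.disjoint_left.1 hdisj hvX h)
        simp only [if_pos hvX, if_neg hvY]
        have := hfx v hvX
        linarith
      · by_cases hvY : v ∈ Y
        · simp only [if_neg hvX, if_pos hvY]
          have := hpos v
          have := mul_nonneg ha0 hw0
          linarith
        · simp only [if_neg hvX, if_neg hvY]
          have := hpos v
          linarith
    · rw [hrdef]
      dsimp only
      rw [Finset.sum_add_distrib, Finset.sum_sub_distrib, hsum]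
      have h1 : (∑ v, (if v ∈ Xm then a else 0)) = (Xm.card : ℝ) * a := by
        rw [Finset.sum_ite_mem, Finset.univ_inter, Finset.sum_const, nsmul_eq_mul]
      have h2 : (∑ v, (if v ∈ Y then a * w else 0)) = (Y.card : ℝ) * (a * w) := by
        rw [Finset.sum_ite_mem, Finset.univ_inter, Finset.sum_const, nsmul_eq_mul]
      rw [h1, h2, hw]
      field_simp
      ring
    · by_cases ha : a = 0
      · subst ha
        rw [hr0]
        exact ⟨s₀, hs₀K, hsupp⟩
      · have hapos : 0 < a := lt_of_le_of_ne ha0 (Ne.symm ha)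
        have hcpos : 0 < c f := lt_of_lt_of_le hapos hac
        have hXs₀ : Xm ⊆ s₀ := fun x hx =>
          (hsupp x).1 (ne_of_gt (lt_of_lt_of_le hcpos (hcle f x hx)))
        have hs₀R : s₀ ⊆ R := by
          rcases hKcases s₀ hs₀K with h | h
          · exact absurd hXs₀ (hK'nXm s₀ h)
          · exact h
        refine ⟨R.filter (fun v => r a f v ≠ 0), hKR _ (Finset.filter_subset _ _), ?_⟩
        intro v
        constructor
        · intro hv
          refine Finset.mem_filter.2 ⟨?_, hv⟩
          by_contra hvR
          apply hv
          have hvX : v ∉ Xm := fun h => hvR (Finset.mem_union_left _ h)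
          have hvY : v ∉ Y := fun h => hvR (Finset.mem_union_right _ h)
          have hfv : f v = 0 := by
            by_contra h
            exact hvR (hs₀R ((hsupp v).1 h))
          rw [hrdef]
          simp [hvX, hvY, hfv]
        · intro hv
          exact (Finset.mem_filter.1 hv).2
  -- the retraction lands in K'
  have memK' : ∀ f ∈ realization K, r (c f) f ∈ realization K' := by
    rintro f hf
    obtain ⟨hpos, hsum, s₀, hs₀K, hsupp⟩ := hf
    by_cases hc0 : c f = 0
    · rw [hc0, hr0]
      obtain ⟨x, hxX, hxe⟩ := Finset.exists_mem_eq_inf' hXm f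
      have hfx0 : f x = 0 := by
        rw [← hxe, ← hcapp f, hc0]
      have hxns₀ : x ∉ s₀ := fun h => ((hsupp x).2 h) hfx0
      have hnXm : ¬ Xm ⊆ s₀ := fun h => hxns₀ (h hxX)
      have hs₀K' : s₀ ∈ K' := by
        rcases hKcases s₀ hs₀K with h | h
        · exact h
        · exact hK'ofR s₀ h hnXm
      exact ⟨hpos, hsum, s₀, hs₀K', hsupp⟩
    · have hcpos : 0 < c f := lt_of_le_of_ne (hcnn f hpos) (Ne.symm hc0)
      obtain ⟨hp2, hs2, -⟩ :=
        memK f ⟨hpos, hsum, s₀, hs₀K, hsupp⟩ (c f) (le_of_lt hcpos) le_rfl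
      have hXs₀ : Xm ⊆ s₀ := fun x hx =>
        (hsupp x).1 (ne_of_gt (lt_of_lt_of_le hcpos (hcle f x hx)))
      have hs₀R : s₀ ⊆ R := by
        rcases hKcases s₀ hs₀K with h | h
        · exact absurd hXs₀ (hK'nXm s₀ h)
        · exact h
      refine ⟨hp2, hs2, R.filter (fun v => r (c f) f v ≠ 0), ?_, ?_⟩
      · apply hK'ofR _ (Finset.filter_subset _ _)
        obtain ⟨x, hxX, hxe⟩ := Finset.exists_mem_eq_inf' hXm f
        intro hXf
        have hmem := hXf hxX
        have hxY : x ∉ Y := fun h => (Finset.disjoint_left.1 hdisj hxX h)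
        have : r (c f) f x = 0 := by
          rw [hrdef]
          simp only [if_pos hxX, if_neg hxY]
          rw [hcapp f, ← hxe]
          ring
        exact (Finset.mem_filter.1 hmem).2 this
      · intro v
        constructor
        · intro hv
          refine Finset.mem_filter.2 ⟨?_, hv⟩
          by_contra hvR
          apply hv
          have hvX : v ∉ Xm := fun h => hvR (Finset.mem_union_left _ h)
          have hvY : v ∉ Y := fun h => hvR (Finset.mem_union_right _ h)
          have hfv : f v = 0 := by
            by_contra h
            exact hvR (hs₀R ((hsupp v).1 h))
          rw [hrdef]
          simp [hvX, hvY, hfv]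
        · intro hv
          exact (Finset.mem_filter.1 hv).2
  -- on K' the retraction is the identity
  have hcK' : ∀ f ∈ realization K', c f = 0 := by
    rintro f ⟨hpos, hsum, s₀, hs₀K', hsupp⟩
    obtain ⟨x, hxX, hxns₀⟩ := Finset.not_subset.1 (hK'nXm s₀ hs₀K')
    have hfx : f x = 0 := by
      by_contra h
      exact hxns₀ ((hsupp x).1 h)
    exact le_antisymm (le_trans (hcle f x hxX) (le_of_eq hfx)) (hcnn f hpos)
  -- continuous maps
  have hreal_sub : realization K' ⊆ realization K := realization_mono hsub
  have hrcont : Continuous (fun f : V → ℝ => r (c f) f) := by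
    apply continuous_pi
    intro v
    rw [hrdef]
    dsimp only
    refine (Continuous.sub ?_ ?_).add ?_
    · exact continuous_apply v
    · by_cases hvX : v ∈ Xm
      · simpa [hvX] using hccont
      · simp only [if_neg hvX]
        exact continuous_const
    · by_cases hvY : v ∈ Y
      · simp only [if_pos hvY]
        exact hccont.mul continuous_const
      · simp only [if_neg hvY]
        exact continuous_const
  let rmap : C(realization K, realization K') :=
    ⟨fun f => ⟨r (c f.1) f.1, memK' f.1 f.2⟩,
      Continuous.subtype_mk (hrcont.comp continuous_subtype_val) _⟩
  let imap : C(realization K', realization K) :=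
    ⟨fun f => ⟨f.1, hreal_sub f.2⟩, Continuous.subtype_mk continuous_subtype_val _⟩
  have hH : ContinuousMap.Homotopy (imap.comp rmap) (ContinuousMap.id _) := by
    refine
      { toFun := fun p =>
          ⟨r ((1 - (p.1 : ℝ)) * c p.2.1) p.2.1, ?_⟩
        continuous_toFun := ?_
        map_zero_left := ?_
        map_one_left := ?_ }
    · refine memK p.2.1 p.2.2 _ ?_ ?_
      · exact mul_nonneg (by linarith [p.1.2.2]) (hcnn p.2.1 p.2.2.1)
      · calc (1 - (p.1 : ℝ)) * c p.2.1 ≤ 1 * c p.2.1 := by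
              apply mul_le_mul_of_nonneg_right _ (hcnn p.2.1 p.2.2.1)
              linarith [p.1.2.1]
          _ = c p.2.1 := one_mul _
    · apply Continuous.subtype_mk
      apply continuous_pi
      intro v
      have hc1 : Continuous fun p : unitInterval × (realization K) => (p.1 : ℝ) :=
        continuous_subtype_val.comp continuous_fst
      have hc2 : Continuous fun p : unitInterval × (realization K) => c p.2.1 :=
        hccont.comp (continuous_subtype_val.comp continuous_snd)
      have hcA : Continuous fun p : unitInterval × (realization K) =>
          (1 - (p.1 : ℝ)) * c p.2.1 := (continuous_const.sub hc1).mul hc2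
      have hcv : Continuous fun p : unitInterval × (realization K) => p.2.1 v :=
        (continuous_apply v).comp (continuous_subtype_val.comp continuous_snd)
      rw [hrdef]
      dsimp only
      refine (Continuous.sub hcv ?_).add ?_
      · by_cases hvX : v ∈ Xm
        · simpa [hvX] using hcA
        · simp only [if_neg hvX]
          exact continuous_const
      · by_cases hvY : v ∈ Y
        · simp only [if_pos hvY]
          exact hcA.mul continuous_const
        · simp only [if_neg hvY]
          exact continuous_const
    · intro f
      apply Subtype.ext
      show r ((1 - ((0 : unitInterval) : ℝ)) * c f.1) f.1 = r (c f.1) f.1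
      norm_num
    · intro f
      apply Subtype.ext
      show r ((1 - ((1 : unitInterval) : ℝ)) * c f.1) f.1 = f.1
      norm_num [hr0]
  have hequiv : ContinuousMap.HomotopyEquiv (realization K) (realization K') :=
    { toFun := rmap
      invFun := imap
      left_inv := ⟨hH⟩
      right_inv := by
        have heq : rmap.comp imap = ContinuousMap.id _ := by
          apply ContinuousMap.ext
          intro f
          apply Subtype.ext
          show r (c f.1) f.1 = f.1
          rw [hcK' f.1 f.2, hr0]
        rw [heq] }
  haveI := hc
  exact hequiv.contractibleSpace

end Topology

section Comb

variable {n : ℕ}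

/-- Cube-shelling property of an enumeration of codewords. -/
def CSfam {t : ℕ} (ρ : Fin t → Finset (Fin n)) : Prop :=
  ∀ i j : Fin t, j < i →
    ∃ x ∈ ρ i ∆ ρ j, ∃ l, l < i ∧ ρ l = ρ i ∆ {x}

lemma symmDiff_singleton_of_mem {A : Finset (Fin n)} {x : Fin n} (h : x ∈ A) :
    A ∆ {x} = A.erase x := by
  ext y
  by_cases hy : y = x <;>
    simp [Finset.mem_symmDiff, Finset.mem_erase, hy, h]

lemma symmDiff_singleton_of_not_mem {A : Finset (Fin n)} {x : Fin n} (h : x ∉ A) :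
    A ∆ {x} = insert x A := by
  ext y
  by_cases hy : y = x <;>
    simp [Finset.mem_symmDiff, Finset.mem_insert, hy, h]

lemma erase_symmDiff {S : Finset (Fin n)} {x x0 : Fin n} (hx : x ∈ S) (hx0 : x0 ∈ S)
    (hne : x ≠ x0) : (S.erase x0) ∆ (S.erase x) = {x0, x} := by
  ext y
  by_cases hy0 : y = x0
  · subst hy0
    simp [Finset.mem_symmDiff, Finset.mem_erase, hx0, hne.symm]
  · by_cases hyx : y = x
    · subst hyx
      simp [Finset.mem_symmDiff, Finset.mem_erase, hx, hne, hy0]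
    · simp [Finset.mem_symmDiff, Finset.mem_erase, hy0, hyx]

/-- The key combinatorial lemma: in a cube-shelling order with all codewords
nonempty, no element can have its whole boundary appearing earlier. -/
lemma dagger {t : ℕ} (ρ : Fin t → Finset (Fin n)) (hinj : Function.Injective ρ)
    (hCS : CSfam ρ) (hne : ∀ i, ρ i ≠ ∅) :
    ∀ (N : ℕ) (S : Finset (Fin n)), S.card ≤ N → ∀ iS : Fin t, ρ iS = S →
      (∀ x ∈ S, ∃ i : Fin t, i < iS ∧ ρ i = S.erase x) → False := by
  intro N
  induction N with
  | zero =>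
    intro S hcard iS hS _
    rw [Nat.le_zero, Finset.card_eq_zero] at hcard
    exact hne iS (hS.trans hcard)
  | succ N IH =>
    intro S hcard iS hS hcoat
    rcases Finset.eq_empty_or_nonempty S with hSe | hSne
    · exact hne iS (hS.trans hSe)
    classical
    -- choose, for each x ∈ S, an earlier index carrying the coatom S.erase x
    have hf : ∀ x : Fin n, ∃ i : Fin t, x ∈ S → (i < iS ∧ ρ i = S.erase x) := by
      intro x
      by_cases hx : x ∈ S
      · obtain ⟨i, hi⟩ := hcoat x hx
        exact ⟨i, fun _ => hi⟩
      · exact ⟨iS, fun h => absurd h hx⟩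
    choose f hfspec using hf
    have himg : (S.image f).Nonempty := hSne.image f
    obtain ⟨x0, hx0S, hx0f⟩ := Finset.mem_image.1 ((S.image f).max'_mem himg)
    have hmax : ∀ x ∈ S, f x ≤ f x0 := by
      intro x hx
      rw [hx0f]
      exact Finset.le_max' _ _ (Finset.mem_image_of_mem f hx)
    have histarlt : f x0 < iS := (hfspec x0 hx0S).1
    have hρistar : ρ (f x0) = S.erase x0 := (hfspec x0 hx0S).2
    -- every coatom of S.erase x0 occurs earlier than istar
    have hcoat' : ∀ x ∈ S.erase x0, ∃ i : Fin t, i < f x0 ∧ ρ i = (S.erase x0).erase x := by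
      intro x hx
      obtain ⟨hxne, hxS⟩ := Finset.mem_erase.1 hx
      have hfxlt : f x < f x0 := by
        have hle : f x ≤ f x0 := hmax x hxS
        rcases lt_or_eq_of_le hle with h | h
        · exact h
        · exfalso
          have : ρ (f x) = ρ (f x0) := by rw [h]
          rw [(hfspec x hxS).2, hρistar] at this
          have := (Finset.erase_inj S hxS).1 this
          exact hxne this
      obtain ⟨y, hyd, l, hl, hρl⟩ := hCS (f x0) (f x) hfxlt
      rw [hρistar, (hfspec x hxS).2, erase_symmDiff hxS hx0S hxne] at hyd
      rcases Finset.mem_insert.1 hyd with hyx0 | hyx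
      · -- y = x0 : would give ρ l = S, contradicting injectivity
        exfalso
        subst hyx0
        rw [hρistar, symmDiff_singleton_of_not_mem (Finset.notMem_erase _ _),
          Finset.insert_erase hx0S, ← hS] at hρl
        have : l = iS := hinj hρl
        subst this
        exact absurd (lt_trans hl histarlt) (lt_irrefl _)
      · have hyx' : y = x := Finset.mem_singleton.1 hyx
        subst hyx'
        refine ⟨l, hl, ?_⟩
        rw [hρl, hρistar, symmDiff_singleton_of_mem hx]
    -- apply the induction hypothesis to S.erase x0
    have hcard' : (S.erase x0).card ≤ N := by
      rw [Finset.card_erase_of_mem hx0S]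
      omega
    exact IH (S.erase x0) hcard' (f x0) hρistar hcoat'

lemma main_contractible :
    ∀ (t : ℕ) (ρ : Fin t → Finset (Fin n)), Function.Injective ρ → CSfam ρ →
      (∀ i, ρ i ≠ ∅) → t ≠ 0 →
      ContractibleSpace (realization (simplicialOfCode (Set.range ρ))) := by
  intro t
  induction t with
  | zero => intro ρ _ _ _ h; exact absurd rfl h
  | succ t' IH =>
    intro ρ hinj hCS hne _
    classical
    by_cases ht' : t' = 0
    · -- base case : a single simplex, a cone over any of its vertices
      subst ht'
      obtain ⟨z, hz⟩ := Finset.nonempty_iff_ne_empty.2 (hne 0)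
      have hone : ∀ i : Fin (0 + 1), ρ i = ρ 0 := fun i => by
        congr 1
        omega
      apply contractible_of_cone _ z
      · rintro s ⟨σ, ⟨i, rfl⟩, hss⟩
        exact ⟨ρ 0, ⟨0, rfl⟩, by
          rw [hone i] at hss
          exact Finset.insert_subset hz hss⟩
      · exact ⟨ρ 0, ⟨0, rfl⟩, Finset.singleton_subset_iff.2 hz⟩
    · -- inductive step
      set ρl := ρ (Fin.last t') with hρldef
      set pre : Fin t' → Finset (Fin n) := fun i => ρ i.castSucc with hpredef
      have hpreinj : Function.Injective pre := fun a b h =>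
        Fin.castSucc_injective _ (hinj h)
      have hcastlem : ∀ l : Fin (t' + 1), ∀ i : Fin t', l < i.castSucc →
          ∃ l' : Fin t', l' < i ∧ l'.castSucc = l := by
        intro l i hl
        have hv : (l : ℕ) < (i : ℕ) := hl
        refine ⟨⟨l.1, lt_trans hv i.2⟩, hv, ?_⟩
        apply Fin.ext
        simp
      have hpreCS : CSfam pre := by
        intro i j hij
        obtain ⟨x, hx, l, hl, hρlx⟩ :=
          hCS i.castSucc j.castSucc (by simpa using hij)
        obtain ⟨l', hl', hl'e⟩ := hcastlem l i hl
        refine ⟨x, hx, l', hl', ?_⟩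
        show ρ l'.castSucc = _
        rw [hl'e, hρlx]
      have hIH : ContractibleSpace (realization (simplicialOfCode (Set.range pre))) :=
        IH pre hpreinj hpreCS (fun i => hne _) ht'
      by_cases hA : ∃ i : Fin t', ρl ⊆ pre i
      · have heq : simplicialOfCode (Set.range ρ) = simplicialOfCode (Set.range pre) := by
          obtain ⟨i0, hi0⟩ := hA
          ext ν
          constructor
          · rintro ⟨σ, ⟨i, rfl⟩, hss⟩
            induction i using Fin.lastCases with
            | last => exact ⟨pre i0, ⟨i0, rfl⟩, hss.trans hi0⟩
            | cast j => exact ⟨pre j, ⟨j, rfl⟩, hss⟩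
          · rintro ⟨σ, ⟨j, rfl⟩, hss⟩
            exact ⟨ρ j.castSucc, ⟨j.castSucc, rfl⟩, hss⟩
        rw [heq]
        exact hIH
      · -- ρl is not contained in any earlier codeword
        set Xm := ρl.filter (fun x => ∃ i : Fin t', pre i = ρl.erase x) with hXmdef
        have hXmsub : Xm ⊆ ρl := Finset.filter_subset _ _
        have hcastlast : ∀ l : Fin (t' + 1), l < Fin.last t' →
            ∃ l' : Fin t', l'.castSucc = l := by
          intro l hl
          have hv : (l : ℕ) < t' := hl
          refine ⟨⟨l.1, hv⟩, ?_⟩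
          apply Fin.ext
          simp
        have hkey : ∀ j : Fin t', ∃ x ∈ Xm, x ∉ pre j := by
          intro j
          obtain ⟨x, hx, l, hl, hρlx⟩ :=
            hCS (Fin.last t') j.castSucc (Fin.castSucc_lt_last j)
          obtain ⟨l', hl'e⟩ := hcastlast l hl
          have hplx : pre l' = ρl ∆ {x} := by
            show ρ l'.castSucc = _
            rw [hl'e, hρlx]
          rcases Finset.mem_symmDiff.1 hx with ⟨hxρl, hxj⟩ | ⟨hxj, hxρl⟩
          · refine ⟨x, ?_, hxj⟩
            rw [hXmdef]
            refine Finset.mem_filter.2 ⟨hxρl, ⟨l', ?_⟩⟩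
            rw [hplx, symmDiff_singleton_of_mem hxρl]
          · exfalso
            refine hA ⟨l', ?_⟩
            rw [hplx, symmDiff_singleton_of_not_mem hxρl]
            exact Finset.subset_insert _ _
        have hXmne : Xm.Nonempty := by
          obtain ⟨x, hx, -⟩ := hkey ⟨0, Nat.pos_of_ne_zero ht'⟩
          exact ⟨x, hx⟩
        by_cases hYe : ρl \ Xm = ∅
        · -- impossible by the `dagger` lemma
          exfalso
          have hXmeq : ρl ⊆ Xm := Finset.sdiff_eq_empty_iff_subset.1 hYe
          refine dagger ρ hinj hCS hne ρl.card ρl le_rfl (Fin.last t') rfl ?_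
          intro x hx
          obtain ⟨-, i, hi⟩ := Finset.mem_filter.1 (hXmeq hx)
          exact ⟨i.castSucc, Fin.castSucc_lt_last i, hi⟩
        · have hYne : (ρl \ Xm).Nonempty := Finset.nonempty_iff_ne_empty.2 hYe
          have hunion : Xm ∪ (ρl \ Xm) = ρl := Finset.union_sdiff_of_subset hXmsub
          refine contractible_step (simplicialOfCode (Set.range ρ))
            (simplicialOfCode (Set.range pre)) Xm (ρl \ Xm) hXmne hYne
            Finset.disjoint_sdiff ?_ ?_ ?_ ?_ ?_ hIH
          · -- K' ⊆ K
            rintro ν ⟨σ, ⟨j, rfl⟩, hss⟩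
            exact ⟨ρ j.castSucc, ⟨j.castSucc, rfl⟩, hss⟩
          · -- everything inside ρl is a face
            intro ν hν
            rw [hunion] at hν
            exact ⟨ρl, ⟨Fin.last t', rfl⟩, hν⟩
          · -- faces inside ρl missing a vertex of Xm are old faces
            intro ν hν hnXm
            rw [hunion] at hν
            obtain ⟨x, hxXm, hxν⟩ := Finset.not_subset.1 hnXm
            obtain ⟨-, i, hi⟩ := Finset.mem_filter.1 hxXm
            refine ⟨pre i, ⟨i, rfl⟩, ?_⟩
            rw [hi]
            exact Finset.subset_erase.2 ⟨hν, hxν⟩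
          · -- faces are either old or inside ρl
            rintro ν ⟨σ, ⟨i, rfl⟩, hss⟩
            induction i using Fin.lastCases with
            | last =>
              right
              rw [hunion]
              exact hss
            | cast j => exact Or.inl ⟨pre j, ⟨j, rfl⟩, hss⟩
          · -- no old face contains all of Xm
            rintro ν ⟨σ, ⟨j, rfl⟩, hss⟩ hXν
            obtain ⟨x, hxXm, hxj⟩ := hkey j
            exact hxj (hss (hXν hxXm))

end Comb

section Polar

variable {n : ℕ}

lemma mem_inl_polarFace {σ : Finset (Fin n)} {x : Fin n} :
    Sum.inl x ∈ polarFace σ ↔ x ∈ σ := by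
  simp [polarFace]

lemma mem_inr_polarFace {σ : Finset (Fin n)} {x : Fin n} :
    Sum.inr x ∈ polarFace σ ↔ x ∉ σ := by
  simp [polarFace]

lemma polarFace_card (σ : Finset (Fin n)) : (polarFace σ).card = n := by
  rw [polarFace, Finset.card_union_of_disjoint]
  · rw [Finset.card_image_of_injective _ Sum.inl_injective,
      Finset.card_image_of_injective _ Sum.inr_injective,
      Finset.card_compl, Fintype.card_fin]
    have := Finset.card_le_univ σ
    rw [Fintype.card_fin] at this
    omega
  · rw [Finset.disjoint_left]
    rintro a ha hb
    obtain ⟨x, -, rfl⟩ := Finset.mem_image.1 ha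
    obtain ⟨y, -, h⟩ := Finset.mem_image.1 hb
    exact Sum.inl_ne_inr h.symm

end Polar

theorem shellable_no_weak_bitflip_obstruction' {n : ℕ} (C : Set (Finset (Fin n)))
    (hsh : Shellable n (polar C)) (g : Finset (Fin n)) (τ : Finset (Fin n))
    (hτ : τ ∈ simplicialOfCode ((fun σ => g ∆ σ) '' C))
    (hnc : ¬ ContractibleSpace
      (realization (link (simplicialOfCode ((fun σ => g ∆ σ) '' C)) τ))) :
    τ ∈ (fun σ => g ∆ σ) '' C := by
  classical
  obtain ⟨t, F, ⟨hcard, hFinj, hshell⟩, hpolar⟩ := hsh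
  have hFmem : ∀ i, F i ∈ polar C := by
    intro i
    rw [hpolar]
    exact ⟨i, subset_rfl⟩
  have hFface : ∀ i : Fin t, ∃ σ, σ ∈ C ∧ F i = polarFace σ := by
    intro i
    obtain ⟨σ, hσC, hsub⟩ := hFmem i
    refine ⟨σ, hσC, Finset.eq_of_subset_of_card_le hsub ?_⟩
    rw [polarFace_card, hcard]
  choose σf hσfC hσfF using hFface
  have hσinj : Function.Injective σf := by
    intro a b h
    apply hFinj
    rw [hσfF a, hσfF b, h]
  have hCsub : ∀ σ ∈ C, ∃ i, σf i = σ := by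
    intro σ hσ
    have hmem : polarFace σ ∈ polar C := ⟨σ, hσ, subset_rfl⟩
    rw [hpolar] at hmem
    obtain ⟨i, hsub⟩ := hmem
    have heq : polarFace σ = F i :=
      Finset.eq_of_subset_of_card_le hsub (by rw [polarFace_card, hcard])
    refine ⟨i, ?_⟩
    have hpf : polarFace (σf i) = polarFace σ := by rw [← hσfF i, heq]
    ext x
    rw [← mem_inl_polarFace, hpf, mem_inl_polarFace]
  set ρ : Fin t → Finset (Fin n) := fun i => g ∆ σf i with hρdef
  have hEeq : (fun σ => g ∆ σ) '' C = Set.range ρ := by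
    ext A
    constructor
    · rintro ⟨σ, hσ, rfl⟩
      obtain ⟨i, rfl⟩ := hCsub σ hσ
      exact ⟨i, rfl⟩
    · rintro ⟨i, rfl⟩
      exact ⟨σf i, hσfC i, rfl⟩
  have hρinj : Function.Injective ρ := by
    intro a b h
    apply hσinj
    have h2 := congrArg (fun s => g ∆ s) h
    simpa [hρdef, symmDiff_symmDiff_cancel_left] using h2
  have hsymm4 : ∀ a b : Finset (Fin n), (g ∆ a) ∆ (g ∆ b) = a ∆ b := by
    intro a b
    ext y
    simp only [Finset.mem_symmDiff]
    tauto
  -- extract the cube-shelling property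
  have hCS : CSfam ρ := by
    intro i j hij
    have hij' : (j : ℕ) < (i : ℕ) := hij
    have hFne : F i ≠ F j := fun h => absurd (hFinj h) (Fin.ne_of_gt hij)
    obtain ⟨μ, hμFi, ⟨l, hl, hμFl⟩, hνμ, hμcard⟩ :=
      hshell i (Nat.lt_of_le_of_lt (Nat.zero_le _) hij') (F i ∩ F j)
        Finset.inter_subset_left ⟨j, hij, Finset.inter_subset_right⟩
    have hn1 : 1 ≤ n := by
      by_contra h
      have hn0 : n = 0 := by omega
      have hi0 : F i = ∅ := Finset.card_eq_zero.1 (by rw [hcard, hn0])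
      have hj0 : F j = ∅ := Finset.card_eq_zero.1 (by rw [hcard, hn0])
      exact hFne (hi0.trans hj0.symm)
    have hcard1 : (F i \ μ).card = 1 := by
      rw [Finset.card_sdiff_of_subset hμFi, hcard, hμcard]
      omega
    obtain ⟨v, hv⟩ := Finset.card_eq_one.1 hcard1
    have hvFi : v ∈ F i := by
      have : v ∈ F i \ μ := hv ▸ Finset.mem_singleton_self v
      exact (Finset.mem_sdiff.1 this).1
    have hvμ : v ∉ μ := by
      intro hc
      have : v ∈ F i \ μ := hv ▸ Finset.mem_singleton_self v
      exact (Finset.mem_sdiff.1 this).2 hc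
    have hμeq : F i \ {v} = μ := by
      rw [← hv, Finset.sdiff_sdiff_self_left, Finset.inter_eq_right.2 hμFi]
    have hvFj : v ∉ F j := by
      intro hc
      exact hvμ (hνμ (Finset.mem_inter.2 ⟨hvFi, hc⟩))
    have hlne : σf l ≠ σf i := fun h => absurd (hσinj h) (Fin.ne_of_lt hl)
    -- agreement of σf l and σf i away from the coordinate of v
    have hagree : ∀ y : Fin n, v ≠ Sum.inl y → v ≠ Sum.inr y →
        (y ∈ σf l ↔ y ∈ σf i) := by
      intro y h1 h2
      by_cases hy : y ∈ σf i
      · have hyFi : Sum.inl y ∈ F i := by rw [hσfF i, mem_inl_polarFace]; exact hy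
        have hyμ : Sum.inl y ∈ μ := by
          rw [← hμeq]
          exact Finset.mem_sdiff.2 ⟨hyFi, by simp [Ne.symm h1]⟩
        have : Sum.inl y ∈ F l := hμFl hyμ
        rw [hσfF l, mem_inl_polarFace] at this
        simp [hy, this]
      · have hyFi : Sum.inr y ∈ F i := by rw [hσfF i, mem_inr_polarFace]; exact hy
        have hyμ : Sum.inr y ∈ μ := by
          rw [← hμeq]
          exact Finset.mem_sdiff.2 ⟨hyFi, by simp [Ne.symm h2]⟩
        have : Sum.inr y ∈ F l := hμFl hyμ
        rw [hσfF l, mem_inr_polarFace] at this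
        simp [hy, this]
    -- the coordinate of v
    obtain ⟨x, hvx, hxi, hxj⟩ :
        ∃ x : Fin n, (v = Sum.inl x ∨ v = Sum.inr x) ∧
          ¬(x ∈ σf i ↔ x ∈ σf j) ∧ True := by
      rcases v with x | x
      · refine ⟨x, Or.inl rfl, ?_, trivial⟩
        have hxin : x ∈ σf i := by rw [← mem_inl_polarFace, ← hσfF i]; exact hvFi
        have hxnotj : x ∉ σf j := by
          rw [← mem_inl_polarFace, ← hσfF j]; exact hvFj
        simp [hxin, hxnotj]
      · refine ⟨x, Or.inr rfl, ?_, trivial⟩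
        have hxin : x ∉ σf i := mem_inr_polarFace.1 (by rw [← hσfF i]; exact hvFi)
        have hxj' : x ∈ σf j := by
          by_contra hc
          apply hvFj
          rw [hσfF j, mem_inr_polarFace]
          exact hc
        simp [hxin, hxj']
    clear hxj
    have hagree' : ∀ y : Fin n, y ≠ x → (y ∈ σf l ↔ y ∈ σf i) := by
      intro y hy
      rcases hvx with rfl | rfl
      · exact hagree y (by simp [Ne.symm hy]) (by simp)
      · exact hagree y (by simp) (by simp [Ne.symm hy])
    have hdiff : ¬(x ∈ σf l ↔ x ∈ σf i) := by
      intro h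
      apply hlne
      ext y
      by_cases hy : y = x
      · subst hy; exact h
      · exact hagree' y hy
    have hσl : σf l = σf i ∆ {x} := by
      ext y
      by_cases hy : y = x
      · subst hy
        have hrhs : y ∈ σf i ∆ {y} ↔ y ∉ σf i := by
          simp [Finset.mem_symmDiff]
        rw [hrhs]
        tauto
      · rw [hagree' y hy]
        simp [Finset.mem_symmDiff, hy]
    have hximem : x ∈ σf i ∆ σf j := by
      simp only [Finset.mem_symmDiff]
      tauto
    refine ⟨x, ?_, l, hl, ?_⟩
    · rw [hρdef]
      show x ∈ (g ∆ σf i) ∆ (g ∆ σf j)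
      rw [hsymm4]
      exact hximem
    · show g ∆ σf l = (g ∆ σf i) ∆ {x}
      rw [hσl, symmDiff_assoc]
  -- now reduce to the link of τ
  rw [hEeq] at hτ hnc ⊢
  by_cases hmem : τ ∈ Set.range ρ
  · exact hmem
  exfalso
  apply hnc
  set P : Finset (Fin t) := Finset.univ.filter (fun i => τ ⊆ ρ i) with hPdef
  have hPne : P.Nonempty := by
    obtain ⟨σ', ⟨i, rfl⟩, hsub⟩ := hτ
    exact ⟨i, Finset.mem_filter.2 ⟨Finset.mem_univ _, hsub⟩⟩
  set e : Fin P.card → Fin t := fun k => ((P.orderIsoOfFin rfl) k : Fin t) with hedef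
  have hemem : ∀ k, e k ∈ P := fun k => ((P.orderIsoOfFin rfl) k).2
  have hemono : StrictMono e := fun a b hab =>
    Subtype.coe_lt_coe.2 ((P.orderIsoOfFin rfl).strictMono hab)
  have hesurj : ∀ l ∈ P, ∃ k, e k = l := by
    intro l hl
    refine ⟨(P.orderIsoOfFin rfl).symm ⟨l, hl⟩, ?_⟩
    rw [hedef]
    simp
  have hindex : ∀ l ∈ P, ∀ i, (l : Fin t) < e i → ∃ k, k < i ∧ e k = l := by
    intro l hl i hlt
    obtain ⟨k, hk⟩ := hesurj l hl
    refine ⟨k, ?_, hk⟩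
    have : e k < e i := by rw [hk]; exact hlt
    exact hemono.lt_iff_lt.1 this
  have hτsub : ∀ k, τ ⊆ ρ (e k) := fun k => (Finset.mem_filter.1 (hemem k)).2
  set ρ' : Fin P.card → Finset (Fin n) := fun k => ρ (e k) \ τ with hρ'def
  have hinj' : Function.Injective ρ' := by
    intro a b h
    have hab : ρ (e a) = ρ (e b) := by
      have h1 := congrArg (fun s => s ∪ τ) h
      simp only [hρ'def] at h1
      rwa [Finset.sdiff_union_of_subset (hτsub a),
        Finset.sdiff_union_of_subset (hτsub b)] at h1
    exact hemono.injective (hρinj hab)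
  have hne' : ∀ k, ρ' k ≠ ∅ := by
    intro k h
    apply hmem
    have heq : ρ (e k) = τ :=
      le_antisymm (Finset.sdiff_eq_empty_iff_subset.1 h) (hτsub k)
    exact ⟨e k, heq⟩
  have hCS' : CSfam ρ' := by
    intro i j hij
    obtain ⟨x, hx, l, hl, hρlx⟩ := hCS (e i) (e j) (hemono hij)
    have hxτ : x ∉ τ := by
      intro hxτ'
      rcases Finset.mem_symmDiff.1 hx with ⟨-, h2⟩ | ⟨-, h2⟩
      · exact h2 (hτsub j hxτ')
      · exact h2 (hτsub i hxτ')
    have hlP : l ∈ P := by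
      refine Finset.mem_filter.2 ⟨Finset.mem_univ _, ?_⟩
      rw [hρlx]
      intro y hy
      refine Finset.mem_symmDiff.2 (Or.inl ⟨hτsub i hy, ?_⟩)
      simp only [Finset.mem_singleton]
      rintro rfl
      exact hxτ hy
    obtain ⟨k, hk, hke⟩ := hindex l hlP i hl
    refine ⟨x, ?_, k, hk, ?_⟩
    · rcases Finset.mem_symmDiff.1 hx with ⟨h1, h2⟩ | ⟨h1, h2⟩
      · exact Finset.mem_symmDiff.2 (Or.inl ⟨Finset.mem_sdiff.2 ⟨h1, hxτ⟩,
          fun hc => h2 (Finset.mem_sdiff.1 hc).1⟩)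
      · exact Finset.mem_symmDiff.2 (Or.inr ⟨Finset.mem_sdiff.2 ⟨h1, hxτ⟩,
          fun hc => h2 (Finset.mem_sdiff.1 hc).1⟩)
    · show ρ (e k) \ τ = (ρ (e i) \ τ) ∆ {x}
      rw [hke, hρlx]
      ext y
      by_cases hyτ : y ∈ τ
      · have hyx : y ≠ x := fun h => hxτ (h ▸ hyτ)
        simp [Finset.mem_symmDiff, Finset.mem_sdiff, hyτ, hyx]
      · simp only [Finset.mem_symmDiff, Finset.mem_sdiff, Finset.mem_singleton, hyτ]
        tauto
  have hlink : link (simplicialOfCode (Set.range ρ)) τ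
      = simplicialOfCode (Set.range ρ') := by
    ext ν
    constructor
    · rintro ⟨⟨σ₁, ⟨i₁, rfl⟩, hν₁⟩, hint, ⟨σ₂, ⟨i₂, rfl⟩, hν₂⟩⟩
      have hi₂P : i₂ ∈ P := by
        refine Finset.mem_filter.2 ⟨Finset.mem_univ _, ?_⟩
        exact (Finset.subset_union_right).trans hν₂
      obtain ⟨k, hk⟩ := hesurj i₂ hi₂P
      refine ⟨ρ' k, ⟨k, rfl⟩, ?_⟩
      show ν ⊆ ρ (e k) \ τ
      rw [hk]
      intro y hy
      refine Finset.mem_sdiff.2 ⟨hν₂ (Finset.mem_union_left _ hy), fun hyτ => ?_⟩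
      have : y ∈ ν ∩ τ := Finset.mem_inter.2 ⟨hy, hyτ⟩
      rw [hint] at this
      exact absurd this (Finset.notMem_empty y)
    · rintro ⟨σ₁, ⟨k, rfl⟩, hν⟩
      have hν' : ν ⊆ ρ (e k) \ τ := hν
      have hν1 : ν ⊆ ρ (e k) := hν'.trans Finset.sdiff_subset
      have hdisj2 : ν ∩ τ = ∅ := by
        rw [Finset.eq_empty_iff_forall_notMem]
        intro y hy
        obtain ⟨hy1, hy2⟩ := Finset.mem_inter.1 hy
        exact (Finset.mem_sdiff.1 (hν' hy1)).2 hy2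
      exact ⟨⟨ρ (e k), ⟨e k, rfl⟩, hν1⟩, hdisj2,
        ⟨ρ (e k), ⟨e k, rfl⟩, Finset.union_subset hν1 (hτsub k)⟩⟩
  rw [hlink]
  exact main_contractible P.card ρ' hinj' hCS' hne' (Finset.card_pos.2 hPne).ne'

/-- If `Γ(C)` is shellable then `C` has no weak bitflip local obstructions: for every
bitflip `g ∈ (ℤ/2)ⁿ` (identified with its support, acting by symmetric difference)
and every face `τ` of `Δ(g·C)` whose link in `Δ(g·C)` is not contractible, `τ` is a
codeword of `g·C`. -/
theorem shellable_no_weak_bitflip_obstruction {n : ℕ} (C : Set (Finset (Fin n)))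
    (hsh : Shellable n (polar C)) (g : Finset (Fin n)) (τ : Finset (Fin n))
    (hτ : τ ∈ simplicialOfCode ((fun σ => g ∆ σ) '' C))
    (hnc : ¬ ContractibleSpace
      (realization (link (simplicialOfCode ((fun σ => g ∆ σ) '' C)) τ))) :
    τ ∈ (fun σ => g ∆ σ) '' C := by
  exact shellable_no_weak_bitflip_obstruction' C hsh g τ hτ hnc
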